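/- Let n ≥ 1, A ∈ ℂ^{n×n}, t ∈ ℝ, and A(t) = cos(t)·H + sin(t)·K where H = (A + A*)/2 and K = (A − A*)/(2i). Suppose y ∈ ℂⁿ is a unit vector with A(t)y = μy, where μ ∈ ℝ is the smallest eigenvalue of the Hermitian matrix A(t). Then Re(e^{−it} z) ≥ Re(e^{−it} · y*Ay) for every z ∈ F(A), and y*Ay ∈ frontier F(A) (the topological frontier of F(A) as a subset of ℂ). -/

import Mathlib

open Matrix

/-- The quadratic form x*Ax = ⟨x, Ax⟩ for A ∈ ℂ^{n×n} and x ∈ ℂⁿ. -/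
noncomputable def qf {n : ℕ} (A : Matrix (Fin n) (Fin n) ℂ) (x : EuclideanSpace ℂ (Fin n)) : ℂ :=
  inner ℂ x (Matrix.toEuclideanLin A x)

/-- The field of values (numerical range) F(A) = { x*Ax : ‖x‖ = 1 }. -/
noncomputable def numericalRange {n : ℕ} (A : Matrix (Fin n) (Fin n) ℂ) : Set ℂ :=
  { z | ∃ x : EuclideanSpace ℂ (Fin n), ‖x‖ = 1 ∧ qf A x = z }

/-- The Hermitian part H = (A + A*)/2. -/
noncomputable def hermPart {n : ℕ} (A : Matrix (Fin n) (Fin n) ℂ) : Matrix (Fin n) (Fin n) ℂ :=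
  (2 : ℂ)⁻¹ • (A + Aᴴ)

/-- The skew part K = (A − A*)/(2i). -/
noncomputable def skewPart {n : ℕ} (A : Matrix (Fin n) (Fin n) ℂ) : Matrix (Fin n) (Fin n) ℂ :=
  (2 * Complex.I)⁻¹ • (A - Aᴴ)

/-- The Hermitian matrix flow A(t) = cos(t)·H + sin(t)·K. -/
noncomputable def matFlow {n : ℕ} (A : Matrix (Fin n) (Fin n) ℂ) (t : ℝ) : Matrix (Fin n) (Fin n) ℂ :=
  (Real.cos t : ℂ) • hermPart A + (Real.sin t : ℂ) • skewPart A

lemma qf_conjTranspose {n : ℕ} (A : Matrix (Fin n) (Fin n) ℂ) (x : EuclideanSpace ℂ (Fin n)) :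
    qf Aᴴ x = starRingEnd ℂ (qf A x) := by
  unfold qf
  rw [Matrix.toEuclideanLin_conjTranspose_eq_adjoint, LinearMap.adjoint_inner_right,
    ← inner_conj_symm]

lemma qf_matFlow {n : ℕ} (A : Matrix (Fin n) (Fin n) ℂ) (t : ℝ) (x : EuclideanSpace ℂ (Fin n)) :
    qf (matFlow A t) x =
      ((Real.cos t * (qf A x).re + Real.sin t * (qf A x).im : ℝ) : ℂ) := by
  have h : qf (matFlow A t) x =
      (Real.cos t : ℂ) * ((2 : ℂ)⁻¹ * (qf A x + starRingEnd ℂ (qf A x)))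
      + (Real.sin t : ℂ) * ((2 * Complex.I)⁻¹ * (qf A x - starRingEnd ℂ (qf A x))) := by
    unfold qf matFlow hermPart skewPart
    simp only [map_add, _root_.map_smul, map_sub, LinearMap.add_apply, LinearMap.smul_apply,
      inner_add_right, inner_smul_right, LinearMap.sub_apply, inner_sub_right]
    have hc := qf_conjTranspose A x
    unfold qf at hc
    rw [hc]
  rw [h, Complex.add_conj, Complex.sub_conj]
  have hI : Complex.I ≠ 0 := Complex.I_ne_zero
  push_cast
  field_simp

lemma mu_le_re_qf {n : ℕ} (hn : 1 ≤ n) (B : Matrix (Fin n) (Fin n) ℂ)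
    (hB : B.IsHermitian) (mu : ℝ)
    (hmu : IsLeast {r : ℝ | (r : ℂ) ∈ spectrum ℂ B} mu)
    (x : EuclideanSpace ℂ (Fin n)) (hx : ‖x‖ = 1) :
    mu ≤ (qf B x).re := by
  haveI : Nonempty (Fin n) := ⟨⟨0, hn⟩⟩
  haveI : Nontrivial (EuclideanSpace ℂ (Fin n)) := inferInstance
  set T := Matrix.toEuclideanLin B with hT
  have hsym : T.IsSymmetric := Matrix.isHermitian_iff_isSymmetric.mp hB
  have hev := hsym.hasEigenvalue_iInf_of_finiteDimensional
  set c := (⨅ v : { v : EuclideanSpace ℂ (Fin n) // v ≠ 0 },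
      RCLike.re (inner ℂ (T v) (v : EuclideanSpace ℂ (Fin n)) : ℂ) / ‖(v : EuclideanSpace ℂ (Fin n))‖ ^ 2 : ℝ) with hc
  have hcs : (c : ℂ) ∈ spectrum ℂ B := by
    rw [← Matrix.spectrum_toEuclideanLin (A := B)]
    exact (Module.End.hasEigenvalue_iff_mem_spectrum.mp hev)
  have h1 : mu ≤ c := hmu.2 hcs
  -- bdd below
  set T' := LinearMap.toContinuousLinearMap T with hT'
  have hbdd : BddBelow (Set.range fun v : { v : EuclideanSpace ℂ (Fin n) // v ≠ 0 } =>
      RCLike.re (inner ℂ (T v) (v : EuclideanSpace ℂ (Fin n)) : ℂ) / ‖(v : EuclideanSpace ℂ (Fin n))‖ ^ 2) := by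
    refine ⟨-‖T'‖, ?_⟩
    rintro r ⟨⟨v, hv⟩, rfl⟩
    simp only
    have hvn : (0:ℝ) < ‖v‖ := norm_pos_iff.mpr hv
    have h2 : |RCLike.re (inner ℂ (T v) v : ℂ)| ≤ ‖T'‖ * ‖v‖ ^ 2 := by
      calc |RCLike.re (inner ℂ (T v) v : ℂ)| ≤ ‖(inner ℂ (T v) v : ℂ)‖ := RCLike.abs_re_le_norm _
        _ ≤ ‖T v‖ * ‖v‖ := norm_inner_le_norm _ _
        _ = ‖T' v‖ * ‖v‖ := rfl
        _ ≤ (‖T'‖ * ‖v‖) * ‖v‖ := by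
            exact mul_le_mul_of_nonneg_right (T'.le_opNorm v) (norm_nonneg v)
        _ = ‖T'‖ * ‖v‖ ^ 2 := by ring
    rw [neg_le, ← neg_div]
    rw [div_le_iff₀ (by positivity)]
    calc -RCLike.re (inner ℂ (T v) v : ℂ) ≤ |RCLike.re (inner ℂ (T v) v : ℂ)| := neg_le_abs _
      _ ≤ ‖T'‖ * ‖v‖ ^ 2 := h2
  have hxne : x ≠ 0 := by intro h; rw [h] at hx; simp at hx
  have h2 : c ≤ RCLike.re (inner ℂ (T x) x : ℂ) / ‖x‖ ^ 2 := ciInf_le hbdd ⟨x, hxne⟩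
  rw [hx] at h2
  simp only [one_pow, div_one] at h2
  have h3 : (qf B x).re = RCLike.re (inner ℂ (T x) x : ℂ) := by
    unfold qf
    rw [← inner_conj_symm]
    simp [RCLike.re_to_complex]
    rw [← inner_conj_symm, Complex.conj_re]
  linarith

lemma matFlow_isHermitian {n : ℕ} (A : Matrix (Fin n) (Fin n) ℂ) (t : ℝ) :
    (matFlow A t).IsHermitian := by
  have h1 : (hermPart A).IsHermitian := by
    unfold hermPart Matrix.IsHermitian
    rw [conjTranspose_smul, conjTranspose_add, conjTranspose_conjTranspose]
    rw [show star ((2:ℂ)⁻¹) = (2:ℂ)⁻¹ by simp, add_comm]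
  have h2 : (skewPart A).IsHermitian := by
    unfold skewPart Matrix.IsHermitian
    rw [conjTranspose_smul, conjTranspose_sub, conjTranspose_conjTranspose]
    rw [show star ((2 * Complex.I : ℂ)⁻¹) = -(2 * Complex.I : ℂ)⁻¹ by
      rw [star_inv₀, ← inv_neg]; congr 1; simp [Complex.star_def]]
    rw [neg_smul, ← smul_neg, neg_sub]
  unfold matFlow Matrix.IsHermitian
  rw [conjTranspose_add, conjTranspose_smul, conjTranspose_smul, h1, h2]
  congr 1 <;> simp [← Complex.ofReal_cos, ← Complex.ofReal_sin, Complex.conj_ofReal]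

lemma re_exp_mul {t : ℝ} (z : ℂ) :
    (Complex.exp (-(Complex.I * t)) * z).re = Real.cos t * z.re + Real.sin t * z.im := by
  have h : -(Complex.I * (t:ℂ)) = ((-t : ℝ) : ℂ) * Complex.I := by push_cast; ring
  rw [h, Complex.exp_mul_I]
  simp [_root_.add_mul, Complex.mul_re, Complex.cos_ofReal_re, Complex.sin_ofReal_re,
    Complex.cos_ofReal_im, Complex.sin_ofReal_im, Real.cos_neg, Real.sin_neg]

/-- if y is a unit eigenvector of A(t) for its smallest eigenvalue μ, then
Re(e^{−it}z) ≥ Re(e^{−it}·y*Ay) for all z ∈ F(A), and y*Ay ∈ frontier F(A). -/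
theorem smallest_eigenvector_point_on_boundary (n : ℕ) (hn : 1 ≤ n)
    (A : Matrix (Fin n) (Fin n) ℂ) (t : ℝ) (mu : ℝ)
    (hmu : IsLeast {r : ℝ | (r : ℂ) ∈ spectrum ℂ (matFlow A t)} mu)
    (y : EuclideanSpace ℂ (Fin n)) (hy : ‖y‖ = 1)
    (heig : Matrix.toEuclideanLin (matFlow A t) y = (mu : ℂ) • y) :
    (∀ z ∈ numericalRange A,
        (Complex.exp (-(Complex.I * t)) * qf A y).re ≤
          (Complex.exp (-(Complex.I * t)) * z).re) ∧
      qf A y ∈ frontier (numericalRange A) := by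
  have key : ∀ x : EuclideanSpace ℂ (Fin n), (Complex.exp (-(Complex.I * t)) * qf A x).re
      = (qf (matFlow A t) x).re := by
    intro x
    rw [re_exp_mul, qf_matFlow]
    simp [Complex.cos_ofReal_re, Complex.sin_ofReal_re]
  have hmuy : qf (matFlow A t) y = (mu : ℂ) := by
    unfold qf
    rw [heig, inner_smul_right, inner_self_eq_norm_sq_to_K, hy]
    simp
  have hbound : ∀ z ∈ numericalRange A,
      mu ≤ (Complex.exp (-(Complex.I * t)) * z).re := by
    rintro z ⟨x, hx, rfl⟩
    rw [key x]
    exact mu_le_re_qf hn _ (matFlow_isHermitian A t) mu hmu x hx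
  have hyv : (Complex.exp (-(Complex.I * t)) * qf A y).re = mu := by
    rw [key y, hmuy]; simp
  refine ⟨fun z hz => by rw [hyv]; exact hbound z hz, subset_closure ⟨y, hy, rfl⟩, ?_⟩
  intro hint
  rw [mem_interior_iff_mem_nhds, Metric.mem_nhds_iff] at hint
  obtain ⟨ε, hε, hball⟩ := hint
  set p := qf A y with hp
  have hw : p - ((ε/2 : ℝ) : ℂ) * Complex.exp (Complex.I * t) ∈ numericalRange A := by
    apply hball
    rw [Metric.mem_ball, dist_eq_norm]
    have : p - ((ε/2 : ℝ) : ℂ) * Complex.exp (Complex.I * t) - p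
        = -(((ε/2 : ℝ) : ℂ) * Complex.exp (Complex.I * t)) := by ring
    rw [this, norm_neg]
    rw [show Complex.I * (t:ℂ) = (t:ℂ) * Complex.I from mul_comm _ _]
    have habs : ‖Complex.exp ((t:ℂ) * Complex.I)‖ = 1 := Complex.norm_exp_ofReal_mul_I t
    rw [norm_mul, habs, mul_one, Complex.norm_real, Real.norm_eq_abs, abs_of_pos (by linarith)]
    linarith
  have hle := hbound _ hw
  have hmul : Complex.exp (-(Complex.I * t)) * Complex.exp (Complex.I * t) = 1 := by
    rw [← Complex.exp_add]; simp
  have hcalc : Complex.exp (-(Complex.I * t)) * (p - ((ε/2 : ℝ) : ℂ) * Complex.exp (Complex.I * t))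
      = Complex.exp (-(Complex.I * t)) * p - ((ε/2 : ℝ) : ℂ) := by
    rw [mul_sub]
    congr 1
    rw [show Complex.exp (-(Complex.I * t)) * (((ε/2 : ℝ) : ℂ) * Complex.exp (Complex.I * t))
        = ((ε/2 : ℝ) : ℂ) * (Complex.exp (-(Complex.I * t)) * Complex.exp (Complex.I * t)) by ring,
      hmul, mul_one]
  rw [hcalc] at hle
  rw [Complex.sub_re, Complex.ofReal_re] at hle
  rw [hyv] at hle
  linarith
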